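/- Let ‖·‖ be any norm on ℝ^d, let A ⊆ ℝ^d be a closed set whose complement is convex, and let p ∉ A. Then dom(p, A) = {x : ‖x−p‖ ≤ dist(x,A)} is convex. -/

import Mathlib

open EMetric

/-- In any finite-dimensional normed space, the dominance region of a point over a
closed set with convex complement is convex. -/
theorem dom_point_convex_complement (E : Type*) [NormedAddCommGroup E] [NormedSpace ℝ E]
    [FiniteDimensional ℝ E] (A : Set E) (hA : IsClosed A) (hAc : Convex ℝ Aᶜ)
    (p : E) (hp : p ∉ A) :
    Convex ℝ {x : E | edist x p ≤ infEdist x A} := by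
  rcases A.eq_empty_or_nonempty with rfl | hne
  · have : {x : E | edist x p ≤ infEdist x (∅ : Set E)} = Set.univ := by
      ext x; simp [EMetric.infEdist, infEdist_empty]
    rw [this]; exact convex_univ
  intro x hx y hy a b ha hb hab
  simp only [Set.mem_setOf_eq] at hx hy ⊢
  simp only [EMetric.infEdist] at hx hy ⊢
  have hfinx := Metric.infEdist_ne_top (x := x) hne
  have hfiny := Metric.infEdist_ne_top (x := y) hne
  have hfinz := Metric.infEdist_ne_top (x := a • x + b • y) hne
  rw [edist_dist, ENNReal.ofReal_le_iff_le_toReal hfinx] at hx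
  rw [edist_dist, ENNReal.ofReal_le_iff_le_toReal hfiny] at hy
  rw [edist_dist, ENNReal.ofReal_le_iff_le_toReal hfinz]
  set rx := Metric.infDist x A with hrx
  set ry := Metric.infDist y A with hry
  have hrx' : (Metric.infEDist x A).toReal = rx := rfl
  have hry' : (Metric.infEDist y A).toReal = ry := rfl
  rw [hrx'] at hx
  rw [hry'] at hy
  show dist (a • x + b • y) p ≤ Metric.infDist (a • x + b • y) A
  set z := a • x + b • y with hz
  have hrx0 : 0 ≤ rx := Metric.infDist_nonneg
  have hry0 : 0 ≤ ry := Metric.infDist_nonneg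
  -- key concavity step
  have key : a * rx + b * ry ≤ Metric.infDist z A := by
    by_contra hK
    push_neg at hK
    set R := a * rx + b * ry with hR
    obtain ⟨w, hw, hlt⟩ := (Metric.infDist_lt_iff hne).mp hK
    have hR0 : 0 < R := lt_of_le_of_lt dist_nonneg hlt
    set v := w - z with hv
    have hvn : ‖v‖ < R := by
      rw [hv, ← dist_eq_norm, dist_comm]
      exact hlt
    set u1 := x + (rx / R) • v with hu1
    set u2 := y + (ry / R) • v with hu2
    have hu1A : u1 ∈ Aᶜ := by
      rcases eq_or_lt_of_le hrx0 with h0 | h0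
      · have hxp : x = p := by
          have : dist x p ≤ 0 := hx.trans (le_of_eq h0.symm)
          have := dist_nonneg (x := x) (y := p)
          exact dist_le_zero.mp (by linarith)
        have : u1 = x := by rw [hu1, ← h0]; simp
        rw [this, hxp]; exact hp
      · intro hmem
        have h1 : rx ≤ dist x u1 := Metric.infDist_le_dist_of_mem hmem
        have h2 : dist x u1 < rx := by
          rw [hu1, dist_self_add_right, norm_smul]
          have : ‖(rx / R)‖ = rx / R := by
            rw [Real.norm_eq_abs, abs_of_nonneg (div_nonneg hrx0 hR0.le)]
          rw [this]
          calc rx / R * ‖v‖ < rx / R * R := by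
                apply mul_lt_mul_of_pos_left hvn (div_pos h0 hR0)
            _ = rx := by field_simp
        linarith
    have hu2A : u2 ∈ Aᶜ := by
      rcases eq_or_lt_of_le hry0 with h0 | h0
      · have hyp : y = p := by
          have : dist y p ≤ 0 := hy.trans (le_of_eq h0.symm)
          have := dist_nonneg (x := y) (y := p)
          exact dist_le_zero.mp (by linarith)
        have : u2 = y := by rw [hu2, ← h0]; simp
        rw [this, hyp]; exact hp
      · intro hmem
        have h1 : ry ≤ dist y u2 := Metric.infDist_le_dist_of_mem hmem
        have h2 : dist y u2 < ry := by
          rw [hu2, dist_self_add_right, norm_smul]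
          have : ‖(ry / R)‖ = ry / R := by
            rw [Real.norm_eq_abs, abs_of_nonneg (div_nonneg hry0 hR0.le)]
          rw [this]
          calc ry / R * ‖v‖ < ry / R * R := by
                apply mul_lt_mul_of_pos_left hvn (div_pos h0 hR0)
            _ = ry := by field_simp
        linarith
    have hcomb : a • u1 + b • u2 = w := by
      have hcoef : a * (rx / R) + b * (ry / R) = 1 := by
        field_simp
        exact hR.symm
      have : a • u1 + b • u2 = (a • x + b • y) + (a * (rx / R) + b * (ry / R)) • v := by
        rw [hu1, hu2]
        simp only [smul_add, add_smul, smul_smul]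
        abel
      rw [this, hcoef, one_smul, ← hz, hv]
      abel
    have : w ∈ Aᶜ := hcomb ▸ hAc hu1A hu2A ha hb hab
    exact this hw
  -- convexity of dist to p
  have hdist : dist z p ≤ a * dist x p + b * dist y p := by
    have hpp : a • p + b • p = p := Convex.combo_self hab p
    calc dist z p = dist (a • x + b • y) (a • p + b • p) := by rw [hz, hpp]
      _ ≤ dist (a • x) (a • p) + dist (b • y) (b • p) := dist_add_add_le _ _ _ _
      _ = a * dist x p + b * dist y p := by
          rw [dist_smul₀, dist_smul₀, Real.norm_eq_abs, Real.norm_eq_abs,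
            abs_of_nonneg ha, abs_of_nonneg hb]
  calc dist z p ≤ a * dist x p + b * dist y p := hdist
    _ ≤ a * rx + b * ry := by
        apply add_le_add (mul_le_mul_of_nonneg_left hx ha) (mul_le_mul_of_nonneg_left hy hb)
    _ ≤ Metric.infDist z A := key
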